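/- If G is a dead end (a dead left end or a dead right end), then G + conj(G) is equivalent to 0 modulo the universe E of dead-ending games. -/

import Mathlib

universe u

namespace SetTheory

/-- Pre-game, as in Mathlib of December 2024 (`SetTheory.PGame`, since removed from Mathlib). -/
inductive PGame : Type (u + 1)
  | mk : ∀ α β : Type u, (α → PGame) → (β → PGame) → PGame

namespace PGame

def LeftMoves : PGame → Type u
  | mk l _ _ _ => l

def RightMoves : PGame → Type u
  | mk _ r _ _ => r

def moveLeft : ∀ g : PGame, LeftMoves g → PGame
  | mk _l _ L _ => L

def moveRight : ∀ g : PGame, RightMoves g → PGame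
  | mk _ _r _ R => R

inductive IsOption : PGame → PGame → Prop
  | moveLeft {x : PGame} (i : x.LeftMoves) : IsOption (x.moveLeft i) x
  | moveRight {x : PGame} (i : x.RightMoves) : IsOption (x.moveRight i) x

instance : Zero PGame :=
  ⟨⟨PEmpty, PEmpty, PEmpty.elim, PEmpty.elim⟩⟩

def neg : PGame → PGame
  | ⟨l, r, L, R⟩ => ⟨r, l, fun i => neg (R i), fun i => neg (L i)⟩

instance : Neg PGame :=
  ⟨neg⟩

/-- Inner recursion of the sum of pre-games (as in the December 2024 Mathlib instance). -/
def addAux (xl xr : Type u) (IHxl : xl → PGame.{u} → PGame.{u})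
    (IHxr : xr → PGame.{u} → PGame.{u}) : PGame.{u} → PGame.{u}
  | mk yl yr yL yR =>
    mk (xl ⊕ yl) (xr ⊕ yr)
      (Sum.elim (fun i => IHxl i (mk yl yr yL yR)) (fun i => addAux xl xr IHxl IHxr (yL i)))
      (Sum.elim (fun i => IHxr i (mk yl yr yL yR)) (fun i => addAux xl xr IHxl IHxr (yR i)))

/-- Sum of pre-games (same definition as the December 2024 Mathlib instance). -/
def add : PGame.{u} → PGame.{u} → PGame.{u}
  | mk xl xr xL xR => addAux xl xr (fun i => add (xL i)) (fun i => add (xR i))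

instance : Add PGame.{u} :=
  ⟨add⟩

end PGame

end SetTheory

open SetTheory

namespace Misere

/-- `F` is a follower of `G`: reachable from `G` by a (possibly empty) sequence of moves. -/
def Follower (F G : PGame) : Prop := Relation.ReflTransGen PGame.IsOption F G

def IsLeftEnd (G : PGame) : Prop := IsEmpty G.LeftMoves
def IsRightEnd (G : PGame) : Prop := IsEmpty G.RightMoves

/-- A dead left end: every follower (including itself) is a left end. -/
def DeadLeftEnd (G : PGame) : Prop := ∀ F, Follower F G → IsLeftEnd F
def DeadRightEnd (G : PGame) : Prop := ∀ F, Follower F G → IsRightEnd F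
def DeadEnd (G : PGame) : Prop := DeadLeftEnd G ∨ DeadRightEnd G

/-- A game is dead-ending if every end follower is a dead end. -/
def DeadEnding (G : PGame) : Prop :=
  ∀ F, Follower F G → (IsLeftEnd F → DeadLeftEnd F) ∧ (IsRightEnd F → DeadRightEnd F)

/-- The universe of dead-ending games. -/
def E : Set PGame := {G | DeadEnding G}

/-- `(misereWins G).1` : Left, moving first, wins `G` under misère play;
    `(misereWins G).2` : Right, moving first, wins `G` under misère play. -/
def misereWins : PGame → Prop × Prop
  | PGame.mk l r L R =>
      (IsEmpty l ∨ ∃ i, ¬ (misereWins (L i)).2,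
       IsEmpty r ∨ ∃ j, ¬ (misereWins (R j)).1)

def LeftWinsGF (G : PGame) : Prop := (misereWins G).1
def RightWinsGF (G : PGame) : Prop := (misereWins G).2

inductive MOutcome : Type
  | L | N | P | R
deriving DecidableEq

/-- Partial order on misère outcomes: `R` minimal, `L` maximal, `N` and `P` incomparable. -/
def MOutcome.le : MOutcome → MOutcome → Prop
  | .R, _ => True
  | _, .L => True
  | a, b => a = b

instance : LE MOutcome := ⟨MOutcome.le⟩

/-- The misère outcome of a game. -/
noncomputable def outcome (G : PGame) : MOutcome := by
  classical
  exact if LeftWinsGF G then (if RightWinsGF G then .N else .L)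
        else (if RightWinsGF G then .R else .P)

/-- `G ≡ H (mod U)`. -/
def equivMod (U : Set PGame) (G H : PGame) : Prop :=
  ∀ X ∈ U, outcome (G + X) = outcome (H + X)

/-- `G ≧ H (mod U)`. -/
def geMod (U : Set PGame) (G H : PGame) : Prop :=
  ∀ X ∈ U, outcome (H + X) ≤ outcome (G + X)

/-- `LeftChain G n`: there is a sequence of `n` consecutive Left moves from `G`
ending at the zero position. -/
inductive LeftChain : PGame → ℕ → Prop
  | zero (G : PGame) : IsLeftEnd G → IsRightEnd G → LeftChain G 0
  | succ (G : PGame) (i : G.LeftMoves) (n : ℕ) :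
      LeftChain (G.moveLeft i) n → LeftChain G (n + 1)

inductive RightChain : PGame → ℕ → Prop
  | zero (G : PGame) : IsLeftEnd G → IsRightEnd G → RightChain G 0
  | succ (G : PGame) (j : G.RightMoves) (n : ℕ) :
      RightChain (G.moveRight j) n → RightChain G (n + 1)

/-- Left-length: minimum number of consecutive Left moves needed to reach zero. -/
noncomputable def leftLength (G : PGame) : ℕ := sInf {n | LeftChain G n}

/-- Right-length: minimum number of consecutive Right moves needed to reach zero. -/
noncomputable def rightLength (G : PGame) : ℕ := sInf {n | RightChain G n}

/-- Normal-play canonical form of a nonnegative integer. -/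
def natGame : ℕ → PGame
  | 0 => 0
  | n + 1 => PGame.mk PUnit PEmpty (fun _ => natGame n) PEmpty.elim

/-- Normal-play canonical form of an integer (negatives are conjugates). -/
def intGame (n : ℤ) : PGame :=
  if 0 ≤ n then natGame n.toNat else -natGame (-n).toNat

/-- Normal-play canonical form of the dyadic rational `m / 2 ^ j`. -/
def dyadicGame : ℤ → ℕ → PGame
  | m, 0 => intGame m
  | m, j + 1 =>
      if m % 2 = 0 then dyadicGame (m / 2) j
      else PGame.mk PUnit PUnit (fun _ => dyadicGame ((m - 1) / 2) j)
            (fun _ => dyadicGame ((m + 1) / 2) j)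

/-- The closure of dead ends: finite disjunctive sums of dead ends. -/
def DeadEndClosure : Set PGame :=
  {G | ∃ l : List PGame, (∀ x ∈ l, DeadEnd x) ∧ G = l.sum}

end Misere

namespace SetTheory

namespace PGame

@[simp]
theorem pgame_neg_neg : ∀ x : PGame, -(-x) = x
  | mk l r L R => by
    change PGame.mk l r (fun i => -(-(L i))) (fun j => -(-(R j))) = _
    congr 1 <;> funext i
    exacts [pgame_neg_neg (L i), pgame_neg_neg (R i)]

instance : InvolutiveNeg PGame :=
  { neg := PGame.neg, neg_neg := pgame_neg_neg }

@[simp]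
theorem neg_def {xl xr : Type u} {xL : xl → PGame} {xR : xr → PGame} :
    -mk xl xr xL xR = mk xr xl (fun j => -xR j) fun i => -xL i := rfl

theorem leftMoves_neg : ∀ x : PGame, (-x).LeftMoves = x.RightMoves
  | ⟨_, _, _, _⟩ => rfl

theorem rightMoves_neg : ∀ x : PGame, (-x).RightMoves = x.LeftMoves
  | ⟨_, _, _, _⟩ => rfl

def toRightMovesNeg {x : PGame} : x.LeftMoves ≃ (-x).RightMoves :=
  Equiv.cast (rightMoves_neg x).symm

theorem moveRight_neg {x : PGame} (i : x.LeftMoves) :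
    (-x).moveRight (toRightMovesNeg i) = -x.moveLeft i := by
  cases x; rfl

theorem moveRight_neg' {x : PGame} (i : (-x).RightMoves) :
    (-x).moveRight i = -x.moveLeft (toRightMovesNeg.symm i) := by
  cases x; rfl

theorem isOption_neg_neg {x y : PGame} : IsOption (-x) (-y) ↔ IsOption x y := by
  have key : ∀ {a b : PGame}, IsOption a b → IsOption (-a) (-b) := by
    intro a b h
    cases h with
    | moveLeft i => rw [← moveRight_neg i]; exact IsOption.moveRight _
    | moveRight j =>
      obtain ⟨l, r, L, R⟩ := b
      exact IsOption.moveLeft (x := -(PGame.mk l r L R)) j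
  refine ⟨fun h => ?_, key⟩
  have := key h
  rwa [neg_neg, neg_neg] at this

theorem leftMoves_add : ∀ x y : PGame, (x + y).LeftMoves = (x.LeftMoves ⊕ y.LeftMoves)
  | ⟨_, _, _, _⟩, ⟨_, _, _, _⟩ => rfl

theorem rightMoves_add : ∀ x y : PGame, (x + y).RightMoves = (x.RightMoves ⊕ y.RightMoves)
  | ⟨_, _, _, _⟩, ⟨_, _, _, _⟩ => rfl

def toLeftMovesAdd {x y : PGame} : x.LeftMoves ⊕ y.LeftMoves ≃ (x + y).LeftMoves :=
  Equiv.cast (leftMoves_add x y).symm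

def toRightMovesAdd {x y : PGame} : x.RightMoves ⊕ y.RightMoves ≃ (x + y).RightMoves :=
  Equiv.cast (rightMoves_add x y).symm

theorem add_moveLeft_inl {x : PGame} (y : PGame) (i : x.LeftMoves) :
    (x + y).moveLeft (toLeftMovesAdd (Sum.inl i)) = x.moveLeft i + y := by
  cases x; cases y; rfl

theorem add_moveRight_inl {x : PGame} (y : PGame) (i : x.RightMoves) :
    (x + y).moveRight (toRightMovesAdd (Sum.inl i)) = x.moveRight i + y := by
  cases x; cases y; rfl

theorem add_moveLeft_inr (x : PGame) {y : PGame} (i : y.LeftMoves) :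
    (x + y).moveLeft (toLeftMovesAdd (Sum.inr i)) = x + y.moveLeft i := by
  cases x; cases y; rfl

theorem add_moveRight_inr (x : PGame) {y : PGame} (i : y.RightMoves) :
    (x + y).moveRight (toRightMovesAdd (Sum.inr i)) = x + y.moveRight i := by
  cases x; cases y; rfl

@[elab_as_elim]
noncomputable def moveRecOn {C : PGame → Sort*} (x : PGame)
    (IH : ∀ y : PGame, (∀ i, C (y.moveLeft i)) → (∀ j, C (y.moveRight j)) → C y) : C x :=
  x.recOn fun yl yr yL yR => IH (mk yl yr yL yR)

theorem wf_isOption : WellFounded IsOption :=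
  ⟨fun x => by
    induction x with
    | mk l r L R ihL ihR =>
      exact Acc.intro _ (fun y h => by
        cases h with
        | moveLeft i => exact ihL i
        | moveRight j => exact ihR j)⟩

def Subsequent : PGame → PGame → Prop :=
  Relation.TransGen IsOption

theorem Subsequent.trans {x y z : PGame} (h1 : Subsequent x y) (h2 : Subsequent y z) :
    Subsequent x z := Relation.TransGen.trans h1 h2

theorem Subsequent.moveLeft {x : PGame} (i : x.LeftMoves) : Subsequent (x.moveLeft i) x :=
  Relation.TransGen.single (IsOption.moveLeft i)

theorem Subsequent.moveRight {x : PGame} (j : x.RightMoves) : Subsequent (x.moveRight j) x :=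
  Relation.TransGen.single (IsOption.moveRight j)

theorem wf_subsequent : WellFounded Subsequent :=
  wf_isOption.transGen

end PGame

end SetTheory

namespace Misere

open SetTheory PGame

/-! ### basic unfoldings -/

theorem leftWinsGF_iff (G : PGame) :
    LeftWinsGF G ↔ IsEmpty G.LeftMoves ∨ ∃ i, ¬ RightWinsGF (G.moveLeft i) := by
  cases G with | mk l r L R => exact Iff.rfl

theorem rightWinsGF_iff (G : PGame) :
    RightWinsGF G ↔ IsEmpty G.RightMoves ∨ ∃ j, ¬ LeftWinsGF (G.moveRight j) := by
  cases G with | mk l r L R => exact Iff.rfl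

theorem not_leftWinsGF_iff (G : PGame) :
    ¬ LeftWinsGF G ↔ Nonempty G.LeftMoves ∧ ∀ i, RightWinsGF (G.moveLeft i) := by
  rw [leftWinsGF_iff]; push_neg; exact Iff.rfl

theorem not_rightWinsGF_iff (G : PGame) :
    ¬ RightWinsGF G ↔ Nonempty G.RightMoves ∧ ∀ j, LeftWinsGF (G.moveRight j) := by
  rw [rightWinsGF_iff]; push_neg; exact Iff.rfl

theorem outcome_congr {A B : PGame} (h1 : LeftWinsGF A ↔ LeftWinsGF B)
    (h2 : RightWinsGF A ↔ RightWinsGF B) : outcome A = outcome B := by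
  unfold outcome
  by_cases hl : LeftWinsGF A <;> by_cases hr : RightWinsGF A
  · rw [if_pos hl, if_pos hr, if_pos (h1.1 hl), if_pos (h2.1 hr)]
  · rw [if_pos hl, if_neg hr, if_pos (h1.1 hl), if_neg (fun h => hr (h2.2 h))]
  · rw [if_neg hl, if_pos hr, if_neg (fun h => hl (h1.2 h)), if_pos (h2.1 hr)]
  · rw [if_neg hl, if_neg hr, if_neg (fun h => hl (h1.2 h)), if_neg (fun h => hr (h2.2 h))]

/-! ### followers and ends -/

theorem Follower.refl (G : PGame) : Follower G G := Relation.ReflTransGen.refl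

theorem Follower.of_isOption {F G : PGame} (h : PGame.IsOption F G) : Follower F G :=
  Relation.ReflTransGen.single h

theorem Follower.tail' {F H G : PGame} (h1 : Follower F H) (h2 : PGame.IsOption H G) :
    Follower F G := Relation.ReflTransGen.tail h1 h2

theorem DeadRightEnd.isRightEnd {G : PGame} (h : DeadRightEnd G) : IsRightEnd G :=
  h G (Follower.refl G)

theorem DeadLeftEnd.isLeftEnd {G : PGame} (h : DeadLeftEnd G) : IsLeftEnd G :=
  h G (Follower.refl G)

theorem DeadRightEnd.moveLeft {G : PGame} (h : DeadRightEnd G) (i : G.LeftMoves) :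
    DeadRightEnd (G.moveLeft i) :=
  fun F hF => h F (hF.tail' (PGame.IsOption.moveLeft i))

theorem DeadLeftEnd.moveRight {G : PGame} (h : DeadLeftEnd G) (j : G.RightMoves) :
    DeadLeftEnd (G.moveRight j) :=
  fun F hF => h F (hF.tail' (PGame.IsOption.moveRight j))

theorem DeadEnding.moveLeft {G : PGame} (h : DeadEnding G) (i : G.LeftMoves) :
    DeadEnding (G.moveLeft i) :=
  fun F hF => h F (hF.tail' (PGame.IsOption.moveLeft i))

theorem DeadEnding.moveRight {G : PGame} (h : DeadEnding G) (j : G.RightMoves) :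
    DeadEnding (G.moveRight j) :=
  fun F hF => h F (hF.tail' (PGame.IsOption.moveRight j))

theorem DeadEnding.deadLeftEnd {G : PGame} (h : DeadEnding G) (hG : IsLeftEnd G) :
    DeadLeftEnd G := (h G (Follower.refl G)).1 hG

theorem DeadEnding.deadRightEnd {G : PGame} (h : DeadEnding G) (hG : IsRightEnd G) :
    DeadRightEnd G := (h G (Follower.refl G)).2 hG

theorem Follower.neg {F G : PGame} (h : Follower F G) : Follower (-F) (-G) := by
  induction h with
  | refl => exact Follower.refl _
  | tail _ hbc ih => exact ih.tail' (PGame.isOption_neg_neg.2 hbc)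

theorem isLeftEnd_neg {G : PGame} : IsLeftEnd (-G) ↔ IsRightEnd G := by
  rw [IsLeftEnd, leftMoves_neg]; exact Iff.rfl

theorem isRightEnd_neg {G : PGame} : IsRightEnd (-G) ↔ IsLeftEnd G := by
  rw [IsRightEnd, rightMoves_neg]; exact Iff.rfl

theorem DeadLeftEnd.neg {G : PGame} (h : DeadLeftEnd G) : DeadRightEnd (-G) := by
  intro F hF
  have hF' : Follower (-F) G := by simpa using hF.neg
  have := h _ hF'
  rwa [isLeftEnd_neg] at this

theorem DeadRightEnd.neg {G : PGame} (h : DeadRightEnd G) : DeadLeftEnd (-G) := by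
  intro F hF
  have hF' : Follower (-F) G := by simpa using hF.neg
  have := h _ hF'
  rwa [isRightEnd_neg] at this

theorem DeadEnding.neg {G : PGame} (h : DeadEnding G) : DeadEnding (-G) := by
  intro F hF
  have hF' : Follower (-F) G := by simpa using hF.neg
  constructor
  · intro hle
    have h2 : DeadRightEnd (-F) := (h _ hF').2 (by rwa [isRightEnd_neg])
    have := h2.neg
    rwa [neg_neg] at this
  · intro hre
    have h2 : DeadLeftEnd (-F) := (h _ hF').1 (by rwa [isLeftEnd_neg])
    have := h2.neg
    rwa [neg_neg] at this

/-! ### negation of sums, conjugate winning -/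

private theorem mk_add_mk {xl xr yl yr : Type u} (xL : xl → PGame) (xR : xr → PGame)
    (yL : yl → PGame) (yR : yr → PGame) :
    mk xl xr xL xR + mk yl yr yL yR =
      mk (xl ⊕ yl) (xr ⊕ yr)
        (Sum.rec (fun i => xL i + mk yl yr yL yR) (fun j => mk xl xr xL xR + yL j))
        (Sum.rec (fun i => xR i + mk yl yr yL yR) (fun j => mk xl xr xL xR + yR j)) := rfl

theorem neg_add_eq' (x : PGame) : ∀ y : PGame, -(x + y) = -x + -y := by
  induction x with
  | mk xl xr xL xR ihL ihR =>
    intro y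
    induction y with
    | mk yl yr yL yR ihL' ihR' =>
      rw [mk_add_mk, neg_def, neg_def, neg_def, mk_add_mk]
      congr 1
      · funext k
        cases k with
        | inl i => simpa using ihR i (mk yl yr yL yR)
        | inr j => simpa using ihR' j
      · funext k
        cases k with
        | inl i => simpa using ihL i (mk yl yr yL yR)
        | inr j => simpa using ihL' j

theorem winsGF_neg (x : PGame) :
    (LeftWinsGF (-x) ↔ RightWinsGF x) ∧ (RightWinsGF (-x) ↔ LeftWinsGF x) := by
  induction x with
  | mk xl xr xL xR ihL ihR =>
    rw [neg_def]
    constructor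
    · rw [leftWinsGF_iff, rightWinsGF_iff]
      exact or_congr Iff.rfl (exists_congr fun j => not_congr (ihR j).2)
    · rw [rightWinsGF_iff, leftWinsGF_iff]
      exact or_congr Iff.rfl (exists_congr fun i => not_congr (ihL i).1)

/-! ### sums : moves bookkeeping -/

theorem isEmpty_leftMoves_add_iff (x y : PGame) :
    IsEmpty (x + y).LeftMoves ↔ IsEmpty x.LeftMoves ∧ IsEmpty y.LeftMoves := by
  rw [leftMoves_add, isEmpty_sum]

theorem isEmpty_rightMoves_add_iff (x y : PGame) :
    IsEmpty (x + y).RightMoves ↔ IsEmpty x.RightMoves ∧ IsEmpty y.RightMoves := by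
  rw [rightMoves_add, isEmpty_sum]

theorem leftMoves_add_cases' {x y : PGame} (k : (x + y).LeftMoves) {P : Prop}
    (h1 : ∀ i : x.LeftMoves, (x + y).moveLeft k = x.moveLeft i + y → P)
    (h2 : ∀ j : y.LeftMoves, (x + y).moveLeft k = x + y.moveLeft j → P) : P := by
  have hk : toLeftMovesAdd (toLeftMovesAdd.symm k) = k := Equiv.apply_symm_apply _ _
  rcases hsum : toLeftMovesAdd.symm k with i | j
  · exact h1 i (by rw [← hk, hsum, add_moveLeft_inl])
  · exact h2 j (by rw [← hk, hsum, add_moveLeft_inr])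

theorem rightMoves_add_cases' {x y : PGame} (k : (x + y).RightMoves) {P : Prop}
    (h1 : ∀ i : x.RightMoves, (x + y).moveRight k = x.moveRight i + y → P)
    (h2 : ∀ j : y.RightMoves, (x + y).moveRight k = x + y.moveRight j → P) : P := by
  have hk : toRightMovesAdd (toRightMovesAdd.symm k) = k := Equiv.apply_symm_apply _ _
  rcases hsum : toRightMovesAdd.symm k with i | j
  · exact h1 i (by rw [← hk, hsum, add_moveRight_inl])
  · exact h2 j (by rw [← hk, hsum, add_moveRight_inr])

theorem neg_leftMoves_elim {G : PGame} (hG : IsRightEnd G) (i : (-G).LeftMoves) {P : Prop} : P := by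
  have : IsEmpty (-G).LeftMoves := isLeftEnd_neg.2 hG
  exact (this.false i).elim

theorem neg_rightMoves_cases {G : PGame} (j : (-G).RightMoves) {P : Prop}
    (h : ∀ i : G.LeftMoves, (-G).moveRight j = -(G.moveLeft i) → P) : P := by
  exact h (toRightMovesNeg.symm j) (by rw [moveRight_neg'])

theorem exists_moveLeft_fst {x y : PGame} (i : x.LeftMoves) :
    ∃ k : (x + y).LeftMoves, (x + y).moveLeft k = x.moveLeft i + y :=
  ⟨toLeftMovesAdd (Sum.inl i), add_moveLeft_inl y i⟩

theorem exists_moveLeft_snd {x y : PGame} (j : y.LeftMoves) :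
    ∃ k : (x + y).LeftMoves, (x + y).moveLeft k = x + y.moveLeft j :=
  ⟨toLeftMovesAdd (Sum.inr j), add_moveLeft_inr x j⟩

theorem exists_moveRight_fst {x y : PGame} (i : x.RightMoves) :
    ∃ k : (x + y).RightMoves, (x + y).moveRight k = x.moveRight i + y :=
  ⟨toRightMovesAdd (Sum.inl i), add_moveRight_inl y i⟩

theorem exists_moveRight_snd {x y : PGame} (j : y.RightMoves) :
    ∃ k : (x + y).RightMoves, (x + y).moveRight k = x + y.moveRight j :=
  ⟨toRightMovesAdd (Sum.inr j), add_moveRight_inr x j⟩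

theorem exists_moveRight_neg {G : PGame} (i : G.LeftMoves) :
    ∃ j : (-G).RightMoves, (-G).moveRight j = -(G.moveLeft i) :=
  ⟨toRightMovesNeg i, moveRight_neg i⟩

theorem subsequent_of_moveLeft {x Q : PGame} (k : x.LeftMoves) (h : x.moveLeft k = Q) :
    Subsequent Q x := h ▸ Subsequent.moveLeft k

theorem subsequent_of_moveRight {x Q : PGame} (k : x.RightMoves) (h : x.moveRight k = Q) :
    Subsequent Q x := h ▸ Subsequent.moveRight k

/-! ### 0 + X -/

theorem winsGF_zero_add (X : PGame) :
    (LeftWinsGF (0 + X) ↔ LeftWinsGF X) ∧ (RightWinsGF (0 + X) ↔ RightWinsGF X) := by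
  induction X using PGame.moveRecOn with
  | IH X ihL ihR =>
    constructor
    · rw [leftWinsGF_iff, leftWinsGF_iff X]
      constructor
      · rintro (h | ⟨k, hk⟩)
        · exact Or.inl ((isEmpty_leftMoves_add_iff 0 X).1 h).2
        · refine leftMoves_add_cases' k (fun i _ => ?_) (fun j hj => ?_)
          · exact i.elim
          · rw [hj] at hk
            exact Or.inr ⟨j, fun h => hk ((ihL j).2.2 h)⟩
      · rintro (h | ⟨j, hj⟩)
        · exact Or.inl ((isEmpty_leftMoves_add_iff 0 X).2 ⟨inferInstanceAs (IsEmpty PEmpty), h⟩)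
        · obtain ⟨k, hk⟩ := exists_moveLeft_snd (x := 0) j
          exact Or.inr ⟨k, by rw [hk]; exact fun h => hj ((ihL j).2.1 h)⟩
    · rw [rightWinsGF_iff, rightWinsGF_iff X]
      constructor
      · rintro (h | ⟨k, hk⟩)
        · exact Or.inl ((isEmpty_rightMoves_add_iff 0 X).1 h).2
        · refine rightMoves_add_cases' k (fun i _ => ?_) (fun j hj => ?_)
          · exact i.elim
          · rw [hj] at hk
            exact Or.inr ⟨j, fun h => hk ((ihR j).1.2 h)⟩
      · rintro (h | ⟨j, hj⟩)
        · exact Or.inl ((isEmpty_rightMoves_add_iff 0 X).2 ⟨inferInstanceAs (IsEmpty PEmpty), h⟩)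
        · obtain ⟨k, hk⟩ := exists_moveRight_snd (x := 0) j
          exact Or.inr ⟨k, by rw [hk]; exact fun h => hj ((ihR j).1.1 h)⟩

/-! ### depth functions -/

open scoped Classical in
noncomputable def ldep : PGame → ℕ
  | PGame.mk l _ L _ => if Nonempty l then sInf (Set.range fun i : l => ldep (L i) + 1) else 0

open scoped Classical in
noncomputable def rdep : PGame → ℕ
  | PGame.mk _ r _ R => if Nonempty r then sInf (Set.range fun j : r => rdep (R j) + 1) else 0

open scoped Classical in
theorem ldep_def (G : PGame) : ldep G =
    if Nonempty G.LeftMoves then sInf (Set.range fun i => ldep (G.moveLeft i) + 1) else 0 := by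
  cases G with | mk l r L R => rfl

open scoped Classical in
theorem rdep_def (G : PGame) : rdep G =
    if Nonempty G.RightMoves then sInf (Set.range fun j => rdep (G.moveRight j) + 1) else 0 := by
  cases G with | mk l r L R => rfl

theorem ldep_of_isEmpty {G : PGame} (h : IsEmpty G.LeftMoves) : ldep G = 0 := by
  rw [ldep_def, if_neg (not_nonempty_iff.2 h)]

theorem rdep_of_isEmpty {G : PGame} (h : IsEmpty G.RightMoves) : rdep G = 0 := by
  rw [rdep_def, if_neg (not_nonempty_iff.2 h)]

theorem ldep_eq_sInf {G : PGame} (h : Nonempty G.LeftMoves) :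
    ldep G = sInf (Set.range fun i => ldep (G.moveLeft i) + 1) := by
  rw [ldep_def, if_pos h]

theorem rdep_eq_sInf {G : PGame} (h : Nonempty G.RightMoves) :
    rdep G = sInf (Set.range fun j => rdep (G.moveRight j) + 1) := by
  rw [rdep_def, if_pos h]

theorem ldep_le {G : PGame} (i : G.LeftMoves) : ldep G ≤ ldep (G.moveLeft i) + 1 := by
  rw [ldep_eq_sInf ⟨i⟩]; exact Nat.sInf_le ⟨i, rfl⟩

theorem rdep_le {G : PGame} (j : G.RightMoves) : rdep G ≤ rdep (G.moveRight j) + 1 := by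
  rw [rdep_eq_sInf ⟨j⟩]; exact Nat.sInf_le ⟨j, rfl⟩

theorem exists_ldep_eq {G : PGame} (h : Nonempty G.LeftMoves) :
    ∃ i, ldep G = ldep (G.moveLeft i) + 1 := by
  have hne : (Set.range fun i => ldep (G.moveLeft i) + 1).Nonempty := ⟨_, ⟨h.some, rfl⟩⟩
  obtain ⟨i, hi⟩ := Nat.sInf_mem hne
  exact ⟨i, by rw [ldep_eq_sInf h, ← hi]⟩

theorem exists_rdep_eq {G : PGame} (h : Nonempty G.RightMoves) :
    ∃ j, rdep G = rdep (G.moveRight j) + 1 := by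
  have hne : (Set.range fun j => rdep (G.moveRight j) + 1).Nonempty := ⟨_, ⟨h.some, rfl⟩⟩
  obtain ⟨j, hj⟩ := Nat.sInf_mem hne
  exact ⟨j, by rw [rdep_eq_sInf h, ← hj]⟩

/-! ### endgame analysis: dead right end world -/

theorem C1 (P : PGame) : ∀ G1 G2 X, P = (G1 + -G2) + X →
    DeadRightEnd G1 → DeadRightEnd G2 → DeadRightEnd X →
    ((LeftWinsGF P ↔ ldep G1 + ldep X ≤ ldep G2) ∧
     (RightWinsGF P ↔ ldep G2 ≤ ldep G1 + ldep X)) := by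
  induction P using PGame.moveRecOn with
  | IH P ihL ihR =>
    rintro G1 G2 X rfl h1 h2 hX
    have h1r : IsRightEnd G1 := h1.isRightEnd
    have h2r : IsRightEnd G2 := h2.isRightEnd
    have hXr : IsRightEnd X := hX.isRightEnd
    constructor
    · constructor
      · intro h
        rw [leftWinsGF_iff] at h
        rcases h with h | ⟨k, hk⟩
        · rw [isEmpty_leftMoves_add_iff, isEmpty_leftMoves_add_iff] at h
          rw [ldep_of_isEmpty h.1.1, ldep_of_isEmpty h.2]
          exact Nat.zero_le _
        · refine leftMoves_add_cases' k (fun k1 hk1 => ?_) (fun j hj => ?_)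
          · refine leftMoves_add_cases' k1 (fun i hi => ?_) (fun i2 _ => ?_)
            · have heq : ((G1 + -G2) + X).moveLeft k = (G1.moveLeft i + -G2) + X :=
                hk1.trans (by rw [hi])
              have hiff := (ihL k (G1.moveLeft i) G2 X heq (h1.moveLeft i) h2 hX).2
              have hnle : ¬(ldep G2 ≤ ldep (G1.moveLeft i) + ldep X) :=
                fun hle => hk (hiff.2 hle)
              have hstep := ldep_le i
              omega
            · exact neg_leftMoves_elim h2r i2
          · have hiff := (ihL k G1 G2 (X.moveLeft j) hj h1 h2 (hX.moveLeft j)).2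
            have hnle : ¬(ldep G2 ≤ ldep G1 + ldep (X.moveLeft j)) :=
              fun hle => hk (hiff.2 hle)
            have hstep := ldep_le j
            omega
      · intro hle
        by_cases hG1 : IsEmpty G1.LeftMoves
        · by_cases hXl : IsEmpty X.LeftMoves
          · rw [leftWinsGF_iff]
            exact Or.inl ((isEmpty_leftMoves_add_iff _ _).2
              ⟨(isEmpty_leftMoves_add_iff _ _).2 ⟨hG1, isLeftEnd_neg.2 h2r⟩, hXl⟩)
          · obtain ⟨j, hjd⟩ := exists_ldep_eq (not_isEmpty_iff.1 hXl)
            obtain ⟨k, hk⟩ := exists_moveLeft_snd (x := G1 + -G2) j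
            rw [leftWinsGF_iff]
            refine Or.inr ⟨k, fun hr => ?_⟩
            have hiff := (ihL k G1 G2 (X.moveLeft j) hk h1 h2 (hX.moveLeft j)).2
            have := hiff.1 hr
            omega
        · obtain ⟨i, hid⟩ := exists_ldep_eq (not_isEmpty_iff.1 hG1)
          obtain ⟨k2, hk2⟩ := exists_moveLeft_fst (y := -G2) i
          obtain ⟨k, hk⟩ := exists_moveLeft_fst (y := X) k2
          rw [leftWinsGF_iff]
          refine Or.inr ⟨k, fun hr => ?_⟩
          have heq : ((G1 + -G2) + X).moveLeft k = (G1.moveLeft i + -G2) + X :=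
            hk.trans (by rw [hk2])
          have hiff := (ihL k (G1.moveLeft i) G2 X heq (h1.moveLeft i) h2 hX).2
          have := hiff.1 hr
          omega
    · constructor
      · intro h
        rw [rightWinsGF_iff] at h
        rcases h with h | ⟨k, hk⟩
        · rw [isEmpty_rightMoves_add_iff, isEmpty_rightMoves_add_iff] at h
          have h2e : IsEmpty G2.LeftMoves := by
            have := h.1.2; rwa [rightMoves_neg] at this
          rw [ldep_of_isEmpty h2e]
          exact Nat.zero_le _
        · refine rightMoves_add_cases' k (fun k1 hk1 => ?_) (fun j _ => ?_)
          · refine rightMoves_add_cases' k1 (fun i1 _ => ?_) (fun j2 hj2 => ?_)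
            · exact (h1r.false i1).elim
            · refine neg_rightMoves_cases j2 (fun i hi => ?_)
              have heq : ((G1 + -G2) + X).moveRight k = (G1 + -(G2.moveLeft i)) + X :=
                hk1.trans (by rw [hj2, hi])
              have hiff := (ihR k G1 (G2.moveLeft i) X heq h1 (h2.moveLeft i) hX).1
              have hnle : ¬(ldep G1 + ldep X ≤ ldep (G2.moveLeft i)) :=
                fun hle => hk (hiff.2 hle)
              have hstep := ldep_le i
              omega
          · exact (hXr.false j).elim
      · intro hle
        by_cases hG2 : IsEmpty G2.LeftMoves
        · rw [rightWinsGF_iff]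
          refine Or.inl ((isEmpty_rightMoves_add_iff _ _).2
            ⟨(isEmpty_rightMoves_add_iff _ _).2 ⟨h1r, ?_⟩, hXr⟩)
          rw [rightMoves_neg]; exact hG2
        · obtain ⟨i, hid⟩ := exists_ldep_eq (not_isEmpty_iff.1 hG2)
          obtain ⟨j2, hj2⟩ := exists_moveRight_neg (G := G2) i
          obtain ⟨k1, hk1⟩ := exists_moveRight_snd (x := G1) j2
          obtain ⟨k, hk⟩ := exists_moveRight_fst (y := X) k1
          rw [rightWinsGF_iff]
          refine Or.inr ⟨k, fun hlw => ?_⟩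
          have heq : ((G1 + -G2) + X).moveRight k = (G1 + -(G2.moveLeft i)) + X :=
            hk.trans (by rw [hk1, hj2])
          have hiff := (ihR k G1 (G2.moveLeft i) X heq h1 (h2.moveLeft i) hX).1
          have := hiff.1 hlw
          omega

theorem DeadLeftEnd.isLeftEnd' {G : PGame} (h : DeadLeftEnd G) : IsLeftEnd G := h.isLeftEnd

theorem C2 (P : PGame) : ∀ G1 G2 X, P = (G1 + -G2) + X →
    DeadRightEnd G1 → DeadRightEnd G2 → DeadLeftEnd X →
    ((LeftWinsGF P ↔ ldep G1 ≤ ldep G2 + rdep X) ∧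
     (RightWinsGF P ↔ ldep G2 + rdep X ≤ ldep G1)) := by
  induction P using PGame.moveRecOn with
  | IH P ihL ihR =>
    rintro G1 G2 X rfl h1 h2 hX
    have h1r : IsRightEnd G1 := h1.isRightEnd
    have h2r : IsRightEnd G2 := h2.isRightEnd
    have hXl : IsLeftEnd X := hX.isLeftEnd
    constructor
    · constructor
      · intro h
        rw [leftWinsGF_iff] at h
        rcases h with h | ⟨k, hk⟩
        · rw [isEmpty_leftMoves_add_iff, isEmpty_leftMoves_add_iff] at h
          rw [ldep_of_isEmpty h.1.1]
          exact Nat.zero_le _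
        · refine leftMoves_add_cases' k (fun k1 hk1 => ?_) (fun j _ => ?_)
          · refine leftMoves_add_cases' k1 (fun i hi => ?_) (fun i2 _ => ?_)
            · have heq : ((G1 + -G2) + X).moveLeft k = (G1.moveLeft i + -G2) + X :=
                hk1.trans (by rw [hi])
              have hiff := (ihL k (G1.moveLeft i) G2 X heq (h1.moveLeft i) h2 hX).2
              have hnle : ¬(ldep G2 + rdep X ≤ ldep (G1.moveLeft i)) :=
                fun hle => hk (hiff.2 hle)
              have hstep := ldep_le i
              omega
            · exact neg_leftMoves_elim h2r i2
          · exact (hXl.false j).elim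
      · intro hle
        by_cases hG1 : IsEmpty G1.LeftMoves
        · rw [leftWinsGF_iff]
          exact Or.inl ((isEmpty_leftMoves_add_iff _ _).2
            ⟨(isEmpty_leftMoves_add_iff _ _).2 ⟨hG1, isLeftEnd_neg.2 h2r⟩, hXl⟩)
        · obtain ⟨i, hid⟩ := exists_ldep_eq (not_isEmpty_iff.1 hG1)
          obtain ⟨k2, hk2⟩ := exists_moveLeft_fst (y := -G2) i
          obtain ⟨k, hk⟩ := exists_moveLeft_fst (y := X) k2
          rw [leftWinsGF_iff]
          refine Or.inr ⟨k, fun hr => ?_⟩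
          have heq : ((G1 + -G2) + X).moveLeft k = (G1.moveLeft i + -G2) + X :=
            hk.trans (by rw [hk2])
          have hiff := (ihL k (G1.moveLeft i) G2 X heq (h1.moveLeft i) h2 hX).2
          have := hiff.1 hr
          omega
    · constructor
      · intro h
        rw [rightWinsGF_iff] at h
        rcases h with h | ⟨k, hk⟩
        · rw [isEmpty_rightMoves_add_iff, isEmpty_rightMoves_add_iff] at h
          have h2e : IsEmpty G2.LeftMoves := by
            have := h.1.2; rwa [rightMoves_neg] at this
          rw [ldep_of_isEmpty h2e, rdep_of_isEmpty h.2]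
          exact Nat.zero_le _
        · refine rightMoves_add_cases' k (fun k1 hk1 => ?_) (fun j hj => ?_)
          · refine rightMoves_add_cases' k1 (fun i1 _ => ?_) (fun j2 hj2 => ?_)
            · exact (h1r.false i1).elim
            · refine neg_rightMoves_cases j2 (fun i hi => ?_)
              have heq : ((G1 + -G2) + X).moveRight k = (G1 + -(G2.moveLeft i)) + X :=
                hk1.trans (by rw [hj2, hi])
              have hiff := (ihR k G1 (G2.moveLeft i) X heq h1 (h2.moveLeft i) hX).1
              have hnle : ¬(ldep G1 ≤ ldep (G2.moveLeft i) + rdep X) :=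
                fun hle => hk (hiff.2 hle)
              have hstep := ldep_le i
              omega
          · have hiff := (ihR k G1 G2 (X.moveRight j) hj h1 h2 (hX.moveRight j)).1
            have hnle : ¬(ldep G1 ≤ ldep G2 + rdep (X.moveRight j)) :=
              fun hle => hk (hiff.2 hle)
            have hstep := rdep_le j
            omega
      · intro hle
        by_cases hG2 : IsEmpty G2.LeftMoves
        · by_cases hXr : IsEmpty X.RightMoves
          · rw [rightWinsGF_iff]
            refine Or.inl ((isEmpty_rightMoves_add_iff _ _).2
              ⟨(isEmpty_rightMoves_add_iff _ _).2 ⟨h1r, ?_⟩, hXr⟩)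
            rw [rightMoves_neg]; exact hG2
          · obtain ⟨j, hjd⟩ := exists_rdep_eq (not_isEmpty_iff.1 hXr)
            obtain ⟨k, hk⟩ := exists_moveRight_snd (x := G1 + -G2) j
            rw [rightWinsGF_iff]
            refine Or.inr ⟨k, fun hlw => ?_⟩
            have hiff := (ihR k G1 G2 (X.moveRight j) hk h1 h2 (hX.moveRight j)).1
            have := hiff.1 hlw
            omega
        · obtain ⟨i, hid⟩ := exists_ldep_eq (not_isEmpty_iff.1 hG2)
          obtain ⟨j2, hj2⟩ := exists_moveRight_neg (G := G2) i
          obtain ⟨k1, hk1⟩ := exists_moveRight_snd (x := G1) j2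
          obtain ⟨k, hk⟩ := exists_moveRight_fst (y := X) k1
          rw [rightWinsGF_iff]
          refine Or.inr ⟨k, fun hlw => ?_⟩
          have heq : ((G1 + -G2) + X).moveRight k = (G1 + -(G2.moveLeft i)) + X :=
            hk.trans (by rw [hk1, hj2])
          have hiff := (ihR k G1 (G2.moveLeft i) X heq h1 (h2.moveLeft i) hX).1
          have := hiff.1 hlw
          omega

/-! ### the main lemma: G dead right end -/

theorem ML (P : PGame) : ∀ G X, P = (G + -G) + X → DeadRightEnd G → DeadEnding X →
    ((LeftWinsGF P ↔ LeftWinsGF X) ∧ (RightWinsGF P ↔ RightWinsGF X)) := by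
  refine PGame.wf_subsequent.induction
    (C := fun P => ∀ G X, P = (G + -G) + X → DeadRightEnd G → DeadEnding X →
      ((LeftWinsGF P ↔ LeftWinsGF X) ∧ (RightWinsGF P ↔ RightWinsGF X))) P ?_
  rintro P IH G X rfl hG hX
  have hGr : IsRightEnd G := hG.isRightEnd
  constructor
  · constructor
    · intro h
      rw [leftWinsGF_iff] at h
      rcases h with h | ⟨k, hk⟩
      · rw [isEmpty_leftMoves_add_iff] at h
        exact (leftWinsGF_iff X).2 (Or.inl h.2)
      · refine leftMoves_add_cases' k (fun k1 hk1 => ?_) (fun j hj => ?_)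
        · refine leftMoves_add_cases' k1 (fun i hi => ?_) (fun i2 _ => ?_)
          · have heq : ((G + -G) + X).moveLeft k = (G.moveLeft i + -G) + X :=
              hk1.trans (by rw [hi])
            rw [heq] at hk
            have hmir := (not_rightWinsGF_iff _).1 hk
            obtain ⟨j2, hj2⟩ := exists_moveRight_neg (G := G) i
            obtain ⟨k1', hk1'⟩ := exists_moveRight_snd (x := G.moveLeft i) j2
            obtain ⟨k', hk'⟩ := exists_moveRight_fst (y := X) k1'
            have hw := hmir.2 k'
            have heq2 : ((G.moveLeft i + -G) + X).moveRight k' =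
                (G.moveLeft i + -(G.moveLeft i)) + X := hk'.trans (by rw [hk1', hj2])
            rw [heq2] at hw
            have hs1 : Subsequent ((G.moveLeft i + -G) + X) ((G + -G) + X) :=
              subsequent_of_moveLeft k heq
            have hs2 : Subsequent ((G.moveLeft i + -(G.moveLeft i)) + X)
                ((G.moveLeft i + -G) + X) := subsequent_of_moveRight k' heq2
            exact ((IH _ (hs2.trans hs1) (G.moveLeft i) X rfl (hG.moveLeft i) hX).1).1 hw
          · exact neg_leftMoves_elim hGr i2
        · rw [hj] at hk
          have hiff := (IH _ (subsequent_of_moveLeft k hj) G (X.moveLeft j) rfl hG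
            (hX.moveLeft j)).2
          exact (leftWinsGF_iff X).2 (Or.inr ⟨j, fun h => hk (hiff.2 h)⟩)
    · intro h
      rw [leftWinsGF_iff X] at h
      rcases h with h | ⟨j, hj⟩
      · have hXd : DeadLeftEnd X := hX.deadLeftEnd h
        exact ((C2 _ G G X rfl hG hG hXd).1).2 (Nat.le_add_right _ _)
      · obtain ⟨k, hk⟩ := exists_moveLeft_snd (x := G + -G) j
        rw [leftWinsGF_iff]
        refine Or.inr ⟨k, fun hr => ?_⟩
        have hiff := (IH _ (subsequent_of_moveLeft k hk) G (X.moveLeft j) rfl hG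
          (hX.moveLeft j)).2
        rw [hk] at hr
        exact hj (hiff.1 hr)
  · constructor
    · intro h
      rw [rightWinsGF_iff] at h
      rcases h with h | ⟨k, hk⟩
      · rw [isEmpty_rightMoves_add_iff] at h
        exact (rightWinsGF_iff X).2 (Or.inl h.2)
      · refine rightMoves_add_cases' k (fun k1 hk1 => ?_) (fun j hj => ?_)
        · refine rightMoves_add_cases' k1 (fun i1 _ => ?_) (fun j2 hj2 => ?_)
          · exact (hGr.false i1).elim
          · refine neg_rightMoves_cases j2 (fun i hi => ?_)
            have heq : ((G + -G) + X).moveRight k = (G + -(G.moveLeft i)) + X :=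
              hk1.trans (by rw [hj2, hi])
            rw [heq] at hk
            have hmir := (not_leftWinsGF_iff _).1 hk
            obtain ⟨k2, hk2⟩ := exists_moveLeft_fst (y := -(G.moveLeft i)) i
            obtain ⟨k', hk'⟩ := exists_moveLeft_fst (y := X) k2
            have hw := hmir.2 k'
            have heq2 : ((G + -(G.moveLeft i)) + X).moveLeft k' =
                (G.moveLeft i + -(G.moveLeft i)) + X := hk'.trans (by rw [hk2])
            rw [heq2] at hw
            have hs1 : Subsequent ((G + -(G.moveLeft i)) + X) ((G + -G) + X) :=
              subsequent_of_moveRight k heq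
            have hs2 : Subsequent ((G.moveLeft i + -(G.moveLeft i)) + X)
                ((G + -(G.moveLeft i)) + X) := subsequent_of_moveLeft k' heq2
            exact ((IH _ (hs2.trans hs1) (G.moveLeft i) X rfl (hG.moveLeft i) hX).2).1 hw
        · rw [hj] at hk
          have hiff := (IH _ (subsequent_of_moveRight k hj) G (X.moveRight j) rfl hG
            (hX.moveRight j)).1
          exact (rightWinsGF_iff X).2 (Or.inr ⟨j, fun h => hk (hiff.2 h)⟩)
    · intro h
      rw [rightWinsGF_iff X] at h
      rcases h with h | ⟨j, hj⟩
      · have hXd : DeadRightEnd X := hX.deadRightEnd h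
        exact ((C1 _ G G X rfl hG hG hXd).2).2 (Nat.le_add_right _ _)
      · obtain ⟨k, hk⟩ := exists_moveRight_snd (x := G + -G) j
        rw [rightWinsGF_iff]
        refine Or.inr ⟨k, fun hlw => ?_⟩
        have hiff := (IH _ (subsequent_of_moveRight k hk) G (X.moveRight j) rfl hG
          (hX.moveRight j)).1
        rw [hk] at hlw
        exact hj (hiff.1 hlw)

end Misere

open Misere SetTheory PGame

/-- a dead end plus its conjugate is equivalent to 0 modulo E. -/
theorem stmt5 (G : PGame) (hG : DeadEnd G) :
    equivMod E (G + -G) 0 := by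
  intro X hX
  have hX' : DeadEnding X := hX
  have h0L := (winsGF_zero_add X).1
  have h0R := (winsGF_zero_add X).2
  have key : (LeftWinsGF ((G + -G) + X) ↔ LeftWinsGF X) ∧
      (RightWinsGF ((G + -G) + X) ↔ RightWinsGF X) := by
    rcases hG with hL | hR
    · have hR' : DeadRightEnd (-G) := hL.neg
      have hXn : DeadEnding (-X) := hX'.neg
      have hml := ML ((-G + -(-G)) + -X) (-G) (-X) rfl hR' hXn
      have e : -((G + -G) + X) = (-G + -(-G)) + -X := by
        rw [neg_add_eq', neg_add_eq']
      constructor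
      · calc LeftWinsGF ((G + -G) + X) ↔ RightWinsGF (-((G + -G) + X)) :=
              ((winsGF_neg _).2).symm
          _ ↔ RightWinsGF ((-G + -(-G)) + -X) := by rw [e]
          _ ↔ RightWinsGF (-X) := hml.2
          _ ↔ LeftWinsGF X := (winsGF_neg X).2
      · calc RightWinsGF ((G + -G) + X) ↔ LeftWinsGF (-((G + -G) + X)) :=
              ((winsGF_neg _).1).symm
          _ ↔ LeftWinsGF ((-G + -(-G)) + -X) := by rw [e]
          _ ↔ LeftWinsGF (-X) := hml.1
          _ ↔ RightWinsGF X := (winsGF_neg X).1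
    · exact ML _ G X rfl hR hX'
  exact outcome_congr (key.1.trans h0L.symm) (key.2.trans h0R.symm)
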